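/- Let c : ℕ → ℚ be defined by c(0) = 1, c(1) = −1/3, c(2n) = c(n) for n ≥ 1, and c(2n+1) = −(c(n) + c(n+1))/2 for n ≥ 1. If K, L ≥ 9 are odd natural numbers with c(K) = c(L), then l(K) = l(L). -/

import Mathlib

lemma odd_pow_eq_pow {A B : ℤ} {i j : ℕ} (hA : Odd A) (hB : Odd B)
    (h : A * 2 ^ j = B * 2 ^ i) : i = j := by
  rcases lt_trichotomy i j with hij | hij | hij
  · exfalso
    have h2 : (2:ℤ)^i ≠ 0 := by positivity
    have : A * 2 ^ (j - i) = B := by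
      have hj : j = (j - i) + i := by omega
      rw [hj, pow_add, ← mul_assoc] at h
      exact mul_right_cancel₀ h2 h
    have : (2:ℤ) ∣ B := by
      rw [← this]
      exact Dvd.dvd.mul_left (dvd_pow_self 2 (by omega)) A
    exact (Int.not_odd_iff_even.mpr (even_iff_two_dvd.mpr this)) hB
  · exact hij
  · exfalso
    have h2 : (2:ℤ)^j ≠ 0 := by positivity
    have : B * 2 ^ (i - j) = A := by
      have hi : i = (i - j) + j := by omega
      rw [hi, pow_add, ← mul_assoc] at h
      exact mul_right_cancel₀ h2 h.symm
    have : (2:ℤ) ∣ A := by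
      rw [← this]
      exact Dvd.dvd.mul_left (dvd_pow_self 2 (by omega)) B
    exact (Int.not_odd_iff_even.mpr (even_iff_two_dvd.mpr this)) hA

lemma log_two_double (m : ℕ) (hm : 1 ≤ m) (r : ℕ) (hr : r ≤ 1) :
    Nat.log 2 (2 * m + r) = Nat.log 2 m + 1 := by
  apply Nat.log_eq_of_pow_le_of_lt_pow
  · calc 2 ^ (Nat.log 2 m + 1) = 2 * 2 ^ (Nat.log 2 m) := by ring
    _ ≤ 2 * m := by
        have := Nat.pow_log_le_self 2 (by omega : m ≠ 0)
        omega
    _ ≤ 2 * m + r := by omega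
  · have := Nat.lt_pow_succ_log_self (by norm_num : 1 < 2) m
    calc 2 * m + r < 2 * (m + 1) := by omega
    _ ≤ 2 * 2 ^ (Nat.log 2 m + 1) := by omega
    _ = 2 ^ (Nat.log 2 m + 1 + 1) := by ring

lemma log_two_mul (m : ℕ) (hm : 1 ≤ m) :
    Nat.log 2 (2 * m) = Nat.log 2 m + 1 := by
  simpa using log_two_double m hm 0 (by omega)

lemma log_two_mul_add_one (m : ℕ) (hm : 1 ≤ m) :
    Nat.log 2 (2 * m + 1) = Nat.log 2 m + 1 :=
  log_two_double m hm 1 le_rfl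

lemma tm_aux (c : ℕ → ℚ) (h1 : c 1 = -1/3)
    (heven : ∀ n : ℕ, 1 ≤ n → c (2 * n) = c n)
    (hodd : ∀ n : ℕ, 1 ≤ n → c (2 * n + 1) = -(c n + c (n + 1)) / 2)
    (m : ℕ) (hm : 4 ≤ m) :
    ∃ a b : ℤ, Odd a ∧
      c m = (b : ℚ) / (3 * 2 ^ (Nat.log 2 m - 2)) ∧
      c (m + 1) = ((b - a : ℤ) : ℚ) / (3 * 2 ^ (Nat.log 2 m - 2)) := by
  induction m using Nat.strong_induction_on with
  | _ m ih =>
  have hc2 : c 2 = -1/3 := by have := heven 1 le_rfl; rw [this, h1]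
  have hc3 : c 3 = 1/3 := by have := hodd 1 le_rfl; norm_num [h1, hc2] at this; linarith
  have hc4 : c 4 = -1/3 := by have := heven 2 (by norm_num); norm_num at this; rw [this, hc2]
  have hc5 : c 5 = 0 := by have := hodd 2 (by norm_num); norm_num [hc2, hc3] at this; linarith
  have hc6 : c 6 = 1/3 := by have := heven 3 (by norm_num); norm_num at this; rw [this, hc3]
  have hc7 : c 7 = 0 := by have := hodd 3 (by norm_num); norm_num [hc3, hc4] at this; linarith
  have hc8 : c 8 = -1/3 := by have := heven 4 (by norm_num); norm_num at this; rw [this, hc4]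
  have l4 : Nat.log 2 4 = 2 := Nat.log_eq_of_pow_le_of_lt_pow (by norm_num) (by norm_num)
  have l5 : Nat.log 2 5 = 2 := Nat.log_eq_of_pow_le_of_lt_pow (by norm_num) (by norm_num)
  have l6 : Nat.log 2 6 = 2 := Nat.log_eq_of_pow_le_of_lt_pow (by norm_num) (by norm_num)
  have l7 : Nat.log 2 7 = 2 := Nat.log_eq_of_pow_le_of_lt_pow (by norm_num) (by norm_num)
  by_cases h8 : m < 8
  · interval_cases m
    · exact ⟨-1, -1, ⟨-1, by ring⟩, by norm_num [hc4, hc5, l4]⟩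
    · exact ⟨-1, 0, ⟨-1, by ring⟩, by norm_num [hc5, hc6, l5]⟩
    · exact ⟨1, 1, ⟨0, by ring⟩, by norm_num [hc6, hc7, l6]⟩
    · exact ⟨1, 0, ⟨0, by ring⟩, by norm_num [hc7, hc8, l7]⟩
  · push_neg at h8
    obtain ⟨m', hsplit⟩ := Nat.even_or_odd' m
    have hm'4 : 4 ≤ m' := by omega
    have hm'lt : m' < m := by omega
    obtain ⟨a, b, ha, hcm', hcm'1⟩ := ih m' hm'lt hm'4
    set e := Nat.log 2 m' - 2 with he
    have hloge : 2 ≤ Nat.log 2 m' := by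
      have : 2 ^ 2 ≤ m' := by omega
      exact (Nat.le_log_iff_pow_le (by norm_num) (by omega)).mpr this
    have hD : (3 : ℚ) * 2 ^ e ≠ 0 := by positivity
    have h2e : ((2 : ℚ)) ^ (e + 1) = 2 * 2 ^ e := by ring
    rcases hsplit with hmeq | hmeq
    · -- m = 2 * m'
      subst hmeq
      have hlog : Nat.log 2 (2 * m') - 2 = e + 1 := by
        rw [log_two_mul m' (by omega)]; omega
      refine ⟨4 * b - a, 2 * b, ?_, ?_, ?_⟩
      · rcases ha with ⟨k, hk⟩; exact ⟨2 * b - k - 1, by omega⟩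
      · rw [heven m' (by omega), hcm', hlog, h2e]
        push_cast
        field_simp
      · rw [hodd m' (by omega), hcm', hcm'1, hlog, h2e]
        push_cast
        field_simp
        ring
    · -- m = 2 * m' + 1
      subst hmeq
      have hlog : Nat.log 2 (2 * m' + 1) - 2 = e + 1 := by
        rw [log_two_mul_add_one m' (by omega)]; omega
      refine ⟨3 * a - 4 * b, a - 2 * b, ?_, ?_, ?_⟩
      · rcases ha with ⟨k, hk⟩; exact ⟨3 * k - 2 * b + 1, by omega⟩
      · rw [hodd m' (by omega), hcm', hcm'1, hlog, h2e]
        push_cast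
        field_simp
        ring
      · have heq : 2 * m' + 1 + 1 = 2 * (m' + 1) := by ring
        rw [heq, heven (m' + 1) (by omega), hcm'1, hlog, h2e]
        push_cast
        field_simp
        ring

lemma l_eq_log (l : ℕ → ℕ) (hl1 : l 1 = 0)
    (hlrec : ∀ K : ℕ, Odd K → 3 ≤ K →
      l K = padicValNat 2 (K - 1) + l ((K - 1) / 2 ^ padicValNat 2 (K - 1)))
    (K : ℕ) (hK : Odd K) (hK3 : 3 ≤ K) : l K = Nat.log 2 (K - 1) := by
  induction K using Nat.strong_induction_on with
  | _ K ih =>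
  have hKodd := hK
  set n := K - 1 with hn
  have hn0 : n ≠ 0 := by omega
  have hneven : 2 ∣ n := by rcases hKodd with ⟨k, hk⟩; exact ⟨k, by omega⟩
  haveI : Fact (Nat.Prime 2) := ⟨Nat.prime_two⟩
  set v := padicValNat 2 n with hv
  have hv1 : 1 ≤ v := one_le_padicValNat_of_dvd (by omega) hneven
  have hdvd : 2 ^ v ∣ n := pow_padicValNat_dvd
  set m' := n / 2 ^ v with hm'
  have hnm : 2 ^ v * m' = n := Nat.mul_div_cancel' hdvd
  have hm'odd : ¬ 2 ∣ m' := by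
    intro ⟨t, ht⟩
    have : 2 ^ (v + 1) ∣ n := ⟨t, by rw [← hnm, ht]; ring⟩
    have := (padicValNat_dvd_iff_le hn0).mp this
    omega
  have hm'1 : 1 ≤ m' := by
    rcases Nat.eq_zero_or_pos m' with h | h
    · omega
    · omega
  have hrec := hlrec K hKodd (by omega)
  rw [← hn, ← hv, ← hm'] at hrec
  have hlogn : Nat.log 2 n = v + Nat.log 2 m' := by
    apply Nat.log_eq_of_pow_le_of_lt_pow
    · rw [pow_add, ← hnm]
      exact Nat.mul_le_mul_left _ (Nat.pow_log_le_self 2 (by omega))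
    · have hlt := Nat.lt_pow_succ_log_self (by norm_num : 1 < 2) m'
      have hp : 0 < 2 ^ v := by positivity
      have hsplit : (2:ℕ) ^ (v + Nat.log 2 m' + 1) = 2 ^ v * 2 ^ (Nat.log 2 m' + 1) := by ring
      rw [← hnm, hsplit]
      exact (Nat.mul_lt_mul_left hp).mpr hlt
  rcases eq_or_ne m' 1 with h1 | hne
  · rw [hrec, h1, hl1, hlogn, h1]
    simp
  · have hm'3 : 3 ≤ m' := by
      rcases Nat.lt_or_ge m' 3 with h | h
      · interval_cases m'
        · omega
        · exact absurd ⟨1, rfl⟩ hm'odd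
      · exact h
    have hm'ltK : m' < K := by
      have h1 : m' ≤ n := by rw [hm']; exact Nat.div_le_self _ _
      have h2 : m' ≠ n := fun h => hm'odd (h ▸ hneven)
      omega
    have hm'o : Odd m' := Nat.odd_iff.mpr (by omega)
    have := ih m' hm'ltK hm'o hm'3
    rw [hrec, this, hlogn]
    have hlogm' : Nat.log 2 m' = Nat.log 2 (m' - 1) := by
      have hlog1 : 1 ≤ Nat.log 2 m' := by
        exact (Nat.le_log_iff_pow_le (by norm_num) (by omega)).mpr (by omega)
      symm
      apply Nat.log_eq_of_pow_le_of_lt_pow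
      · have h1 : 2 ^ Nat.log 2 m' ≤ m' := Nat.pow_log_le_self 2 (by omega)
        have h2 : 2 ^ Nat.log 2 m' ≠ m' := by
          intro h
          apply hm'odd
          rw [← h]
          exact dvd_pow_self 2 (by omega)
        omega
      · have := Nat.lt_pow_succ_log_self (by norm_num : 1 < 2) m'
        omega
    omega

/-- Let `c : ℕ → ℚ` be the Thue–Morse Fourier coefficient sequence and `l`
the function `l(1)=0`, `l(K) = v₂(K−1) + l((K−1)/2^{v₂(K−1)})` for odd `K ≥ 3`.
If `K, L ≥ 9` are odd and `c(K) = c(L)`, then `l(K) = l(L)`. -/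
theorem tm_equivalent_implies_same_l
    (c : ℕ → ℚ) (h0 : c 0 = 1) (h1 : c 1 = -1/3)
    (heven : ∀ n : ℕ, 1 ≤ n → c (2 * n) = c n)
    (hodd : ∀ n : ℕ, 1 ≤ n → c (2 * n + 1) = -(c n + c (n + 1)) / 2)
    (l : ℕ → ℕ) (hl1 : l 1 = 0)
    (hlrec : ∀ K : ℕ, Odd K → 3 ≤ K →
      l K = padicValNat 2 (K - 1) + l ((K - 1) / 2 ^ padicValNat 2 (K - 1)))
    (K L : ℕ) (hK : Odd K) (hL : Odd L) (hK9 : 9 ≤ K) (hL9 : 9 ≤ L)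
    (hcKL : c K = c L) :
    l K = l L := by
  have key : ∀ M : ℕ, Odd M → 9 ≤ M → ∃ A : ℤ, Odd A ∧
      l M = Nat.log 2 (M / 2) + 1 ∧
      c M = (A : ℚ) / (3 * 2 ^ (Nat.log 2 (M / 2) - 1)) := by
    intro M hM hM9
    obtain ⟨m, hm⟩ := hM
    have hMeq : M = 2 * m + 1 := by omega
    have hm4 : 4 ≤ m := by omega
    obtain ⟨a, b, ha, hcm, hcm1⟩ := tm_aux c h1 heven hodd m hm4
    have hloge : 2 ≤ Nat.log 2 m := (Nat.le_log_iff_pow_le (by norm_num) (by omega)).mpr (by omega)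
    have hMdiv : M / 2 = m := by omega
    have hlM : l M = Nat.log 2 m + 1 := by
      rw [l_eq_log l hl1 hlrec M (⟨m, hm⟩) (by omega)]
      have : M - 1 = 2 * m := by omega
      rw [this, log_two_mul m (by omega)]
    refine ⟨a - 2 * b, ?_, by rw [hMdiv]; exact hlM, ?_⟩
    · rcases ha with ⟨k, hk⟩; exact ⟨k - b, by omega⟩
    · rw [hMdiv, hMeq, hodd m (by omega), hcm, hcm1]
      have h2 : Nat.log 2 m - 2 + 1 = Nat.log 2 m - 1 := by omega
      rw [← h2]
      push_cast
      have hD : (3 : ℚ) * 2 ^ (Nat.log 2 m - 2) ≠ 0 := by positivity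
      field_simp
      ring
  obtain ⟨A, hA, hlK, hcK⟩ := key K hK hK9
  obtain ⟨B, hB, hlL, hcL⟩ := key L hL hL9
  rw [hcK, hcL] at hcKL
  set i := Nat.log 2 (K / 2) - 1 with hi
  set j := Nat.log 2 (L / 2) - 1 with hj
  have hcross : (A : ℚ) * 2 ^ j = (B : ℚ) * 2 ^ i := by
    field_simp at hcKL
    linarith
  have hcrossZ : A * 2 ^ j = B * 2 ^ i := by
    exact_mod_cast hcross
  have hij : i = j := odd_pow_eq_pow hA hB hcrossZ
  have hKlog : 2 ≤ Nat.log 2 (K / 2) :=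
    (Nat.le_log_iff_pow_le (by norm_num) (by omega)).mpr (by omega)
  have hLlog : 2 ≤ Nat.log 2 (L / 2) :=
    (Nat.le_log_iff_pow_le (by norm_num) (by omega)).mpr (by omega)
  omega
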